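/- arXiv:1306.3595 — 2 statements merged into one kernel-verified Lean document; each statement's English description precedes it below -/
import Mathlib

section
/- Let l > 0, d ∈ (0,1), let F ∈ SR_d^{⌊d+l⌋+2}(0+), set f = F^{(0,1)}, and fix t ∈ (0,1]. Then there exists h ∈ (0,t) such that for every ε > 0, limsup_{δ↓0} δ^{2ε} ∫_{t−h}^{t−δ} (t−r)^{l−ε} ∫_t^{t+h} |f^{(⌊l+d⌋+1,0)}(z,r)| dz dr < ∞, where f^{(k,0)} denotes the k-th partial derivative of f in its first variable. -/
open Set Filter MeasureTheory intervalIntegral Polynomial Metric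
open scoped Topology

noncomputable section

/-- Mixed partial derivative `F^{(n,m)}`: `n` derivatives in the first (time) variable
and `m` derivatives in the second variable. -/
noncomputable def pderiv2 (n m : ℕ) (F : ℝ → ℝ → ℝ) : ℝ → ℝ → ℝ :=
  fun s r => iteratedDeriv m (fun r' => iteratedDeriv n (fun s' => F s' r') s) r

/-- The closed half-plane `E = {(s,r) : r ≤ s}`. -/
def Ebar : Set (ℝ × ℝ) := {p | p.2 ≤ p.1}

/-- The open half-plane `Ẽ = {(s,r) : r < s}`. -/
def Etil : Set (ℝ × ℝ) := {p | p.2 < p.1}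

/-- Membership in `C₊^{(k)}(E)` : continuous on `E`, `k` times continuously
differentiable on `Ẽ`, and strictly positive on `Ẽ`. -/
structure CPlus (k : ℕ) (F : ℝ → ℝ → ℝ) : Prop where
  cont : ContinuousOn (fun p : ℝ × ℝ => F p.1 p.2) Ebar
  smooth : ContDiffOn ℝ k (fun p : ℝ × ℝ => F p.1 p.2) Etil
  pos : ∀ p ∈ Etil, 0 < F p.1 p.2

/-- `F` is a function of smooth variation of index `(ρ, k)` at the diagonal,
i.e. `F ∈ SR_ρ^k(0+)`. -/
structure SmoothVariation (ρ : ℝ) (k : ℕ) (F : ℝ → ℝ → ℝ) : Prop where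
  mem : CPlus k F
  condA : ∀ K : Set ℝ, IsCompact K → ∀ ε > 0, ∃ h₀ > 0, ∀ h : ℝ, 0 < h → h < h₀ →
    ∀ t ∈ K, |h * pderiv2 0 1 F t (t - h) / F t (t - h) + ρ| < ε
  condB : ∀ K : Set ℝ, IsCompact K → ∀ ε > 0, ∃ h₀ > 0, ∀ h : ℝ, 0 < h → h < h₀ →
    ∀ t ∈ K, |h * pderiv2 1 0 F (t + h) t / F (t + h) t - ρ| < ε
  condC : ∀ j : ℕ, 2 ≤ j → j ≤ k → ∀ K : Set ℝ, IsCompact K → ∀ ε > 0, ∃ h₀ > 0,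
    ∀ h : ℝ, 0 < h → h < h₀ → ∀ t ∈ K,
      |h ^ j * pderiv2 (j - 1) 1 F t (t - h) / F t (t - h)
        + ∏ i ∈ Finset.range j, (ρ - (i : ℝ))| < ε
  condD : ∀ K : Set ℝ, IsCompact K → ∀ ε > 0, ∃ h₀ > 0, ∀ h : ℝ, 0 < h → h < h₀ →
    ∀ t ∈ K, |h ^ 2 * pderiv2 0 2 F t (t - h) / F t (t - h) - ρ * (ρ - 1)| < ε

/-- The 2-microlocal space with gauge function `F`, `C_F^{d,s'}(t₀)`. -/
def MemCF (F : ℝ → ℝ → ℝ) (d s' t₀ : ℝ) (g : ℝ → ℝ) : Prop :=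
  ∃ C > 0, ∃ h > 0, ∃ P : Polynomial ℝ, (P.natDegree : ℤ) ≤ ⌊d - s'⌋ ∧
    ∀ u v : ℝ, u ∈ Metric.ball t₀ h → v ∈ Metric.ball t₀ h → v ≤ u →
      |(g u - P.eval u) - (g v - P.eval v)| ≤
        C * F u v * (|u - t₀| + |v - t₀|) ^ (-s')

/-- The classical 2-microlocal space `C^{σ,s'}(t₀)`. -/
def MemC2ML (σ s' t₀ : ℝ) (g : ℝ → ℝ) : Prop :=
  ∃ C > 0, ∃ h > 0, ∃ P : Polynomial ℝ, (P.natDegree : ℤ) ≤ ⌊σ - s'⌋ ∧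
    ∀ u v : ℝ, u ∈ Metric.ball t₀ h → v ∈ Metric.ball t₀ h →
      |(g u - P.eval u) - (g v - P.eval v)| ≤
        C * |u - v| ^ σ * (|u - t₀| + |v - t₀|) ^ (-s')

/-- The pointwise Hölder space `C^l(t₀)`. -/
def PtwHolder (l t₀ : ℝ) (g : ℝ → ℝ) : Prop :=
  ∃ C > 0, ∃ h > 0, ∃ P : Polynomial ℝ, (P.natDegree : ℤ) ≤ ⌊l⌋ ∧
    ∀ t ∈ Metric.ball t₀ h, |g t - P.eval t| ≤ C * |t - t₀| ^ l

/-- The pointwise Hölder exponent `h_g(t₀) = sup{l : g ∈ C^l(t₀)}`. -/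
def holderExp (g : ℝ → ℝ) (t₀ : ℝ) : ℝ := sSup {l | PtwHolder l t₀ g}

/-- The Hölder exponent with gauge function `F`,
`h̄^d_g(t₀) = d − inf{s' ≤ 0 : g ∈ C_F^{d,s'}(t₀)}`. -/
def holderGaugeExp (F : ℝ → ℝ → ℝ) (d : ℝ) (g : ℝ → ℝ) (t₀ : ℝ) : ℝ :=
  d - sInf {s' | s' ≤ 0 ∧ MemCF F d s' t₀ g}

/-- The 2-microlocal frontier `σ_{g,t₀}(s') = sup{σ ∈ [0,1) : g ∈ C^{σ,s'}(t₀)}`. -/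
def frontier2ML (g : ℝ → ℝ) (t₀ s' : ℝ) : ℝ :=
  sSup {σ | σ ∈ Set.Ico (0:ℝ) 1 ∧ MemC2ML σ s' t₀ g}

/-- `g` is càdlàg on `[0,∞)`: right-continuous with left limits. -/
def CadlagOn (g : ℝ → ℝ) : Prop :=
  (∀ t : ℝ, 0 ≤ t → Tendsto g (𝓝[Set.Ici t] t) (𝓝 (g t))) ∧
  (∀ t : ℝ, 0 < t → ∃ L : ℝ, Tendsto g (𝓝[Set.Iio t] t) (𝓝 L))

namespace BddII

noncomputable def D1 (g : ℝ × ℝ → ℝ) : ℝ × ℝ → ℝ := fun p => fderiv ℝ g p (1, 0)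
noncomputable def D2 (g : ℝ × ℝ → ℝ) : ℝ × ℝ → ℝ := fun p => fderiv ℝ g p (0, 1)

lemma etil_open : IsOpen Etil := isOpen_lt continuous_snd continuous_fst

lemma hasDerivAt_p1 {g : ℝ×ℝ→ℝ} {z r : ℝ} (hg : DifferentiableAt ℝ g (z,r)) :
    HasDerivAt (fun s => g (s, r)) (D1 g (z,r)) z := by
  have h1 : HasDerivAt (fun s : ℝ => ((s, r) : ℝ×ℝ)) ((1:ℝ), (0:ℝ)) z :=
    (hasDerivAt_id z).prodMk (hasDerivAt_const z r)
  simpa [D1, Function.comp_def] using hg.hasFDerivAt.comp_hasDerivAt z h1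

lemma hasDerivAt_p2 {g : ℝ×ℝ→ℝ} {z r : ℝ} (hg : DifferentiableAt ℝ g (z,r)) :
    HasDerivAt (fun r' => g (z, r')) (D2 g (z,r)) r := by
  have h1 : HasDerivAt (fun r' : ℝ => ((z, r') : ℝ×ℝ)) ((0:ℝ), (1:ℝ)) r :=
    (hasDerivAt_const r z).prodMk (hasDerivAt_id r)
  simpa [D2, Function.comp_def] using hg.hasFDerivAt.comp_hasDerivAt r h1

lemma contDiffOn_D1 {g : ℝ×ℝ→ℝ} {U : Set (ℝ×ℝ)} (hU : IsOpen U) {m : ℕ}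
    (hg : ContDiffOn ℝ (m+1 : ℕ) g U) : ContDiffOn ℝ (m : ℕ) (D1 g) U := by
  have h := hg.fderiv_of_isOpen hU (m := (m:ℕ∞)) (by exact_mod_cast le_rfl)
  exact h.clm_apply contDiffOn_const

lemma contDiffOn_D2 {g : ℝ×ℝ→ℝ} {U : Set (ℝ×ℝ)} (hU : IsOpen U) {m : ℕ}
    (hg : ContDiffOn ℝ (m+1 : ℕ) g U) : ContDiffOn ℝ (m : ℕ) (D2 g) U := by
  have h := hg.fderiv_of_isOpen hU (m := (m:ℕ∞)) (by exact_mod_cast le_rfl)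
  exact h.clm_apply contDiffOn_const

lemma contDiffOn_iterD1 {U : Set (ℝ×ℝ)} (hU : IsOpen U) :
    ∀ (j c : ℕ) (g : ℝ×ℝ→ℝ), ContDiffOn ℝ ((j + c : ℕ)) g U → ContDiffOn ℝ (c : ℕ) (D1^[j] g) U := by
  intro j
  induction j with
  | zero => intro c g hg; simpa using hg
  | succ j ih =>
    intro c g hg
    rw [Function.iterate_succ_apply]
    have hg' : ContDiffOn ℝ (((j+c)+1 : ℕ)) g U := by
      rwa [show (j+1)+c = (j+c)+1 by omega] at hg
    exact ih c (D1 g) (contDiffOn_D1 hU hg')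

lemma diffAt_of_contDiffOn {g : ℝ×ℝ→ℝ} {U : Set (ℝ×ℝ)} (hU : IsOpen U) {m : ℕ}
    (hm : 1 ≤ m) (hg : ContDiffOn ℝ (m : ℕ) g U) {p : ℝ×ℝ} (hp : p ∈ U) :
    DifferentiableAt ℝ g p :=
  (hg.differentiableOn (by exact_mod_cast Nat.one_le_iff_ne_zero.mp hm)).differentiableAt (hU.mem_nhds hp)

lemma iteratedDeriv_congr_nhds : ∀ (j : ℕ) {φ ψ : ℝ → ℝ} {x : ℝ},
    φ =ᶠ[𝓝 x] ψ → iteratedDeriv j φ x = iteratedDeriv j ψ x := by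
  intro j
  induction j with
  | zero => intro φ ψ x h; simpa using h.self_of_nhds
  | succ j ih =>
    intro φ ψ x h
    rw [iteratedDeriv_succ', iteratedDeriv_succ']
    exact ih h.deriv

lemma iter_partial1 {U : Set (ℝ×ℝ)} (hU : IsOpen U) :
    ∀ (j : ℕ) (g : ℝ×ℝ→ℝ), ContDiffOn ℝ (j : ℕ) g U → ∀ p ∈ U,
      iteratedDeriv j (fun s => g (s, p.2)) p.1 = D1^[j] g p := by
  intro j
  induction j with
  | zero => intro g hg p hp; simp
  | succ j ih =>
    intro g hg p hp
    obtain ⟨z, r⟩ := p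
    have hcont : Continuous (fun s : ℝ => ((s, r) : ℝ×ℝ)) := continuous_id.prodMk continuous_const
    have hnb : {s : ℝ | (s, r) ∈ U} ∈ 𝓝 z := (hU.preimage hcont).mem_nhds hp
    rw [iteratedDeriv_succ]
    have hev : (fun s => iteratedDeriv j (fun s' => g (s', r)) s) =ᶠ[𝓝 z]
        (fun s => D1^[j] g (s, r)) := by
      filter_upwards [hnb] with s hs
      exact ih g (hg.of_le (by exact_mod_cast Nat.le_succ j)) (s, r) hs
    rw [hev.deriv_eq]
    have hdiff : DifferentiableAt ℝ (D1^[j] g) (z, r) :=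
      diffAt_of_contDiffOn hU le_rfl (contDiffOn_iterD1 hU j 1 g hg) hp
    rw [Function.iterate_succ_apply']
    exact (hasDerivAt_p1 hdiff).deriv

lemma D1_D2_comm {g : ℝ×ℝ→ℝ} {p : ℝ×ℝ} (hg : ContDiffAt ℝ 2 g p) :
    D1 (D2 g) p = D2 (D1 g) p := by
  have hsymm := hg.isSymmSndFDerivAt (by simp)
  have hdiff : DifferentiableAt ℝ (fderiv ℝ g) p :=
    (hg.fderiv_right (m := 1) (by norm_num)).differentiableAt (by norm_num)
  have e1 : ∀ v w : ℝ×ℝ, fderiv ℝ (fun q => fderiv ℝ g q v) p w = fderiv ℝ (fderiv ℝ g) p w v := by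
    intro v w
    have h2 : HasFDerivAt (fun q => fderiv ℝ g q v)
        ((ContinuousLinearMap.apply ℝ ℝ v).comp (fderiv ℝ (fderiv ℝ g) p)) p :=
      (ContinuousLinearMap.apply ℝ ℝ v).hasFDerivAt.comp p hdiff.hasFDerivAt
    rw [h2.fderiv]; rfl
  show fderiv ℝ (fun q => fderiv ℝ g q (0,1)) p (1,0) = fderiv ℝ (fun q => fderiv ℝ g q (1,0)) p (0,1)
  rw [e1, e1, hsymm]

lemma iterD1_D2_comm {U : Set (ℝ×ℝ)} (hU : IsOpen U) :
    ∀ (j : ℕ) (g : ℝ×ℝ→ℝ), ContDiffOn ℝ ((j+1 : ℕ)) g U → ∀ p ∈ U,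
      D1^[j] (D2 g) p = D2 (D1^[j] g) p := by
  intro j
  induction j with
  | zero => intro g hg p hp; rfl
  | succ j ih =>
    intro g hg p hp
    rw [Function.iterate_succ_apply']
    have hev : D1^[j] (D2 g) =ᶠ[𝓝 p] (fun q => D2 (D1^[j] g) q) := by
      filter_upwards [hU.mem_nhds hp] with q hq
      exact ih g (hg.of_le (by exact_mod_cast Nat.le_succ (j+1))) q hq
    have h1 : D1 (D1^[j] (D2 g)) p = D1 (fun q => D2 (D1^[j] g) q) p := by
      show (fderiv ℝ (D1^[j] (D2 g)) p) (1, 0) = (fderiv ℝ (fun q => D2 (D1^[j] g) q) p) (1, 0)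
      rw [hev.fderiv_eq]
    rw [h1]
    have hCA : ContDiffAt ℝ 2 (D1^[j] g) p := by
      have := contDiffOn_iterD1 hU j 2 g (by rwa [show (j+1)+1 = j+2 by omega] at hg)
      exact this.contDiffAt (hU.mem_nhds hp)
    have h2 : D1 (fun q => D2 (D1^[j] g) q) p = D2 (D1 (D1^[j] g)) p := D1_D2_comm hCA
    rw [h2, ← Function.iterate_succ_apply' D1 j g]


lemma pd01_eq_D2 {F : ℝ→ℝ→ℝ} {m : ℕ} (hm : 1 ≤ m)
    (hsm : ContDiffOn ℝ (m : ℕ) (fun p : ℝ×ℝ => F p.1 p.2) Etil)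
    {z r : ℝ} (hzr : r < z) : pderiv2 0 1 F z r = D2 (fun p : ℝ×ℝ => F p.1 p.2) (z,r) := by
  have hmem : ((z,r) : ℝ×ℝ) ∈ Etil := hzr
  have hdiff : DifferentiableAt ℝ (fun p : ℝ×ℝ => F p.1 p.2) (z,r) :=
    diffAt_of_contDiffOn etil_open hm hsm hmem
  have h2 := hasDerivAt_p2 hdiff
  simp only [pderiv2, iteratedDeriv_one, iteratedDeriv_zero]
  exact h2.deriv

lemma swap_eq {F : ℝ→ℝ→ℝ} {n : ℕ}
    (hsm : ContDiffOn ℝ ((n+1 : ℕ)) (fun p : ℝ×ℝ => F p.1 p.2) Etil)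
    {z r : ℝ} (hzr : r < z) :
    pderiv2 n 0 (pderiv2 0 1 F) z r = D2 (D1^[n] (fun p : ℝ×ℝ => F p.1 p.2)) (z,r) ∧
    pderiv2 n 1 F z r = D2 (D1^[n] (fun p : ℝ×ℝ => F p.1 p.2)) (z,r) := by
  set g : ℝ×ℝ→ℝ := fun p => F p.1 p.2 with hgdef
  have hmem : ((z,r) : ℝ×ℝ) ∈ Etil := hzr
  have hdiffIter : DifferentiableAt ℝ (D1^[n] g) (z,r) :=
    diffAt_of_contDiffOn etil_open le_rfl (contDiffOn_iterD1 etil_open n 1 g hsm) hmem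
  constructor
  · -- LHS
    simp only [pderiv2, iteratedDeriv_zero]
    have hnb : {s : ℝ | (s, r) ∈ Etil} ∈ 𝓝 z :=
      (etil_open.preimage (continuous_id.prodMk continuous_const)).mem_nhds hmem
    have hev : (fun s' => iteratedDeriv 1 (fun r' => F s' r') r)
        =ᶠ[𝓝 z] (fun s' => D2 g (s', r)) := by
      filter_upwards [hnb] with s hs
      simp only [iteratedDeriv_one]
      have : DifferentiableAt ℝ g (s, r) :=
        diffAt_of_contDiffOn etil_open (by omega) hsm hs
      exact (hasDerivAt_p2 this).deriv
    rw [iteratedDeriv_congr_nhds n hev]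
    have h1 : iteratedDeriv n (fun s' => D2 g (s', r)) z = D1^[n] (D2 g) (z, r) :=
      iter_partial1 etil_open n (D2 g) (contDiffOn_D2 etil_open hsm) (z, r) hmem
    rw [h1]
    exact iterD1_D2_comm etil_open n g hsm (z,r) hmem
  · -- RHS
    simp only [pderiv2, iteratedDeriv_one, iteratedDeriv_zero]
    have hnb : {r' : ℝ | (z, r') ∈ Etil} ∈ 𝓝 r :=
      (etil_open.preimage (continuous_const.prodMk continuous_id)).mem_nhds hmem
    have hev : (fun r' => iteratedDeriv n (fun s' => F s' r') z)
        =ᶠ[𝓝 r] (fun r' => D1^[n] g (z, r')) := by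
      filter_upwards [hnb] with r' hr'
      exact iter_partial1 etil_open n g (hsm.of_le (by exact_mod_cast Nat.le_succ n)) (z, r') hr'
    rw [hev.deriv_eq]
    exact (hasDerivAt_p2 hdiffIter).deriv


lemma stepB (F : ℝ→ℝ→ℝ) (d η t h a₀ : ℝ) (m : ℕ) (hm : 1 ≤ m)
    (hcont : ContinuousOn (fun p : ℝ×ℝ => F p.1 p.2) Ebar)
    (hsm : ContDiffOn ℝ (m:ℕ) (fun p : ℝ×ℝ => F p.1 p.2) Etil)
    (hposF : ∀ p ∈ Etil, 0 < F p.1 p.2)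
    (ht0 : 0 < t) (ht1 : t ≤ 1) (hh0 : 0 < h) (hh2 : h ≤ 1/2)
    (hη : 0 < η) (ha₀ : 0 < a₀)
    (hA : ∀ x : ℝ, 0 < x → x < a₀ → ∀ z ∈ Icc (0:ℝ) 2,
      |x * pderiv2 0 1 F z (z - x) / F z (z - x) + d| < η) :
    ∃ C2 > 0, ∀ z ∈ Icc t (t+h), ∀ g ∈ Ioc (0:ℝ) (2*h), F z (z - g) ≤ C2 * g ^ (d - η) := by
  set G : ℝ×ℝ→ℝ := fun p => F p.1 p.2 with hGdef
  set g₂ := min (2*h) (a₀/2) with hg₂def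
  have hg₂pos : 0 < g₂ := lt_min (by linarith) (by linarith)
  have hg₂le : g₂ ≤ 2*h := min_le_left _ _
  have hg₂lt : g₂ < a₀ := lt_of_le_of_lt (min_le_right _ _) (by linarith)
  have hzK : ∀ z ∈ Icc t (t+h), z ∈ Icc (0:ℝ) 2 := by
    intro z hz; exact ⟨by linarith [hz.1], by linarith [hz.2]⟩
  have hmemE : ∀ (z x : ℝ), 0 < x → ((z, z - x) : ℝ×ℝ) ∈ Etil := by
    intro z x hx; show z - x < z; linarith
  have hFpos : ∀ (z x : ℝ), 0 < x → 0 < F z (z - x) := fun z x hx => hposF _ (hmemE z x hx)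
  -- derivative of the comparison function
  have hder : ∀ z : ℝ, ∀ x : ℝ, 0 < x →
      HasDerivAt (fun y => Real.log (F z (z - y)) - (d - η) * Real.log y)
        (D2 G (z, z - x) * (-1) / (F z (z - x)) - (d - η) * x⁻¹) x := by
    intro z x hx
    have hmem := hmemE z x hx
    have hdiffAt : DifferentiableAt ℝ G (z, z - x) :=
      diffAt_of_contDiffOn etil_open hm hsm hmem
    have h1 : HasDerivAt (fun y : ℝ => z - y) (-1) x := by
      simpa using (hasDerivAt_id x).const_sub z
    have h2 := hasDerivAt_p2 hdiffAt
    have h3 : HasDerivAt (fun y => F z (z - y)) (D2 G (z, z - x) * (-1)) x := by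
      simpa [Function.comp_def] using h2.comp x h1
    have h4 := h3.log (ne_of_gt (hFpos z x hx))
    exact h4.sub ((Real.hasDerivAt_log (ne_of_gt hx)).const_mul (d - η))
  -- monotonicity
  have hmono : ∀ z ∈ Icc t (t+h), ∀ g ∈ Ioc (0:ℝ) g₂,
      Real.log (F z (z-g)) - (d-η)*Real.log g ≤ Real.log (F z (z-g₂)) - (d-η)*Real.log g₂ := by
    intro z hz g hg
    have hMono : MonotoneOn (fun y => Real.log (F z (z - y)) - (d - η) * Real.log y)
        (Ioc (0:ℝ) g₂) := by
      apply monotoneOn_of_deriv_nonneg (convex_Ioc 0 g₂)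
      · intro x hx; exact ((hder z x hx.1).continuousAt).continuousWithinAt
      · rw [interior_Ioc]
        intro x hx; exact ((hder z x hx.1).differentiableAt).differentiableWithinAt
      · rw [interior_Ioc]
        intro x hx
        rw [(hder z x hx.1).deriv]
        have hxa : x < a₀ := by
          have := hx.2; have := hg₂lt; linarith
        have hAx := hA x hx.1 hxa z (hzK z hz)
        rw [pd01_eq_D2 hm hsm (show z - x < z by linarith [hx.1])] at hAx
        have hFp : 0 < F z (z - x) := hFpos z x hx.1
        set D := D2 G (z, z - x) with hD
        have h5 : x * D / F z (z - x) < η - d := by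
          have := (abs_lt.mp hAx).2; linarith
        have h6 : D / F z (z - x) < (η - d)/x := by
          rw [lt_div_iff₀ hx.1]
          calc D / F z (z - x) * x = x * D / F z (z - x) := by ring
          _ < η - d := h5
        have h7 : (d-η)*x⁻¹ = -((η-d)/x) := by
          field_simp; ring
        have h8 : D * (-1) / F z (z - x) = -(D / F z (z - x)) := by ring
        rw [h7, h8]
        linarith
    exact hMono hg (right_mem_Ioc.mpr hg₂pos) hg.2
  -- exponentiate
  have claim1 : ∀ z ∈ Icc t (t+h), ∀ g ∈ Ioc (0:ℝ) g₂,
      F z (z-g) ≤ (F z (z-g₂) * g₂ ^ (-(d-η))) * g ^ (d-η) := by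
    intro z hz g hg
    have hFg : 0 < F z (z-g) := hFpos z g hg.1
    have hFg₂ : 0 < F z (z-g₂) := hFpos z g₂ hg₂pos
    have h1 := hmono z hz g hg
    calc F z (z-g) = Real.exp (Real.log (F z (z-g))) := (Real.exp_log hFg).symm
      _ ≤ Real.exp (Real.log (F z (z-g₂)) + (d-η)*(Real.log g - Real.log g₂)) :=
          Real.exp_le_exp.mpr (by linarith)
      _ = (F z (z-g₂) * g₂ ^ (-(d-η))) * g ^ (d-η) := by
          have he : (d-η)*(Real.log g - Real.log g₂)
              = Real.log g * (d-η) + Real.log g₂ * (-(d-η)) := by ring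
          rw [he, ← add_assoc, Real.exp_add, Real.exp_add, Real.exp_log hFg₂,
            Real.rpow_def_of_pos hg.1, Real.rpow_def_of_pos hg₂pos]
          ring
  -- uniform constant on the compact parts
  have hcont1 : ContinuousOn (fun z => F z (z - g₂)) (Icc t (t+h)) := by
    apply hcont.comp ((continuous_id.prodMk (continuous_id.sub continuous_const)).continuousOn)
    intro z _; show z - g₂ ≤ z; linarith
  obtain ⟨zB, hzBmem, hzB'⟩ := isCompact_Icc.exists_isMaxOn
    ⟨t, left_mem_Icc.mpr (by linarith)⟩ hcont1
  have hzB := isMaxOn_iff.mp hzB'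
  set B := F zB (zB - g₂) with hB
  have hBpos : 0 < B := hFpos zB g₂ hg₂pos
  -- second range
  have hS2 : IsCompact ((Icc t (t+h)) ×ˢ (Icc g₂ (2*h))) := isCompact_Icc.prod isCompact_Icc
  have hcont2 : ContinuousOn (fun p : ℝ×ℝ => F p.1 (p.1 - p.2)) ((Icc t (t+h)) ×ˢ (Icc g₂ (2*h))) := by
    apply hcont.comp ((continuous_fst.prodMk (continuous_fst.sub continuous_snd)).continuousOn)
    rintro ⟨z, x⟩ hp
    show z - x ≤ z
    have := hp.2.1; linarith
  obtain ⟨pB, hpBmem, hpB'⟩ := hS2.exists_isMaxOn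
    ⟨(t, g₂), ⟨left_mem_Icc.mpr (by linarith), left_mem_Icc.mpr hg₂le⟩⟩ hcont2
  have hpB := isMaxOn_iff.mp hpB'
  set B2 := F pB.1 (pB.1 - pB.2) with hB2
  have hB2pos : 0 < B2 := by
    apply hFpos pB.1 pB.2
    have := hpBmem.2.1; linarith
  set m0 := min (g₂ ^ (d-η)) ((2*h) ^ (d-η)) with hm0def
  have hm0pos : 0 < m0 :=
    lt_min (Real.rpow_pos_of_pos hg₂pos _) (Real.rpow_pos_of_pos (by linarith) _)
  have hm0 : ∀ g ∈ Icc g₂ (2*h), m0 ≤ g ^ (d-η) := by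
    intro g hg
    rcases le_or_gt 0 (d-η) with he|he
    · exact le_trans (min_le_left _ _) (Real.rpow_le_rpow (le_of_lt hg₂pos) hg.1 he)
    · exact le_trans (min_le_right _ _)
        (Real.rpow_le_rpow_of_nonpos (lt_of_lt_of_le hg₂pos hg.1) hg.2 (le_of_lt he))
  refine ⟨max (B * g₂ ^ (-(d-η))) (B2 / m0), ?_, ?_⟩
  · exact lt_of_lt_of_le (mul_pos hBpos (Real.rpow_pos_of_pos hg₂pos _)) (le_max_left _ _)
  · intro z hz g hg
    rcases le_or_gt g g₂ with hgle|hggt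
    · calc F z (z-g) ≤ (F z (z-g₂) * g₂ ^ (-(d-η))) * g ^ (d-η) :=
            claim1 z hz g ⟨hg.1, hgle⟩
        _ ≤ max (B * g₂ ^ (-(d-η))) (B2 / m0) * g ^ (d-η) := by
            apply mul_le_mul_of_nonneg_right _ (Real.rpow_nonneg (le_of_lt hg.1) _)
            exact le_trans (mul_le_mul_of_nonneg_right (hzB z hz)
              (Real.rpow_nonneg (le_of_lt hg₂pos) _)) (le_max_left _ _)
    · have h1 : F z (z-g) ≤ B2 := hpB (z, g) ⟨hz, ⟨le_of_lt hggt, hg.2⟩⟩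
      have h2 : B2 = (B2 / m0) * m0 := by field_simp
      calc F z (z-g) ≤ (B2 / m0) * m0 := by rw [← h2]; exact h1
        _ ≤ max (B * g₂ ^ (-(d-η))) (B2 / m0) * g ^ (d-η) := by
            apply mul_le_mul (le_max_right _ _) (hm0 g ⟨le_of_lt hggt, hg.2⟩)
              (le_of_lt hm0pos)
            exact le_trans (le_of_lt (div_pos hB2pos hm0pos)) (le_trans (le_max_right _ _) le_rfl)


end BddII

/-- Lemma 6.2: there exists `h ∈ (0,t)` such that for every `ε > 0` the
quantity `δ^{2ε} ∫_{t−h}^{t−δ} (t−r)^{l−ε} ∫_t^{t+h} |f^{(⌊l+d⌋+1,0)}(z,r)| dz dr`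
stays bounded as `δ ↓ 0`. -/
theorem bounded_iterated_integral
    (l d : ℝ) (hl : 0 < l) (hd : d ∈ Set.Ioo (0:ℝ) 1)
    (F : ℝ → ℝ → ℝ) (hF : SmoothVariation d ((⌊d + l⌋).toNat + 2) F)
    (f : ℝ → ℝ → ℝ) (hf : f = pderiv2 0 1 F)
    (t : ℝ) (ht : t ∈ Set.Ioc (0:ℝ) 1) :
    ∃ h ∈ Set.Ioo (0:ℝ) t, ∀ ε > 0, ∃ M : ℝ, ∃ δ₀ > 0, ∀ δ : ℝ, 0 < δ → δ < δ₀ →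
      δ ^ (2 * ε) * (∫ r in (t - h)..(t - δ), (t - r) ^ (l - ε) *
        ∫ z in t..(t + h), |pderiv2 ((⌊l + d⌋).toNat + 1) 0 f z r|) ≤ M := by
  obtain ⟨hd0, hd1⟩ := hd
  obtain ⟨ht0, ht1⟩ := ht
  subst hf
  have hdl : ⌊d + l⌋ = ⌊l + d⌋ := by rw [add_comm]
  set n : ℕ := (⌊l + d⌋).toNat + 1 with hn
  have hfl0 : (0:ℤ) ≤ ⌊l + d⌋ := Int.floor_nonneg.mpr (by linarith)
  have hcast : ((⌊l + d⌋).toNat : ℝ) = ((⌊l + d⌋ : ℤ) : ℝ) := by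
    exact_mod_cast Int.toNat_of_nonneg hfl0
  have hnR : (n:ℝ) = ((⌊l + d⌋ : ℤ) : ℝ) + 1 := by
    rw [hn]; push_cast [hcast]; ring
  have hltn : l + d < (n:ℝ) := by rw [hnR]; exact Int.lt_floor_add_one _
  have hgen : (n:ℝ) ≤ l + d + 1 := by
    rw [hnR]; have := Int.floor_le (l + d); linarith
  have hn1 : 1 ≤ n := by omega
  have hn1R : (1:ℝ) ≤ (n:ℝ) := by exact_mod_cast hn1
  have hkn : (⌊d + l⌋).toNat + 2 = n + 1 := by rw [hdl, hn]
  have hsm : ContDiffOn ℝ ((n+1 : ℕ)) (fun p : ℝ×ℝ => F p.1 p.2) Etil := by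
    have h := hF.mem.smooth; rwa [hkn] at h
  obtain ⟨h₀c, h₀cpos, hC⟩ := hF.condC (n+1) (by omega) hkn.ge (Icc 0 2) isCompact_Icc 1 one_pos
  set h := min (t/2) (min (h₀c/4) (1/2)) with hhdef
  have hh0 : 0 < h := lt_min (by linarith) (lt_min (by linarith) (by norm_num))
  have hht : h < t := lt_of_le_of_lt (min_le_left _ _) (by linarith)
  have hhc : 2*h < h₀c := by
    have h1 : h ≤ h₀c/4 := le_trans (min_le_right _ _) (min_le_left _ _)
    linarith
  have hh2 : h ≤ 1/2 := le_trans (min_le_right _ _) (min_le_right _ _)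
  refine ⟨h, ⟨hh0, hht⟩, ?_⟩
  intro ε hε
  set η := ε/2 with hηdef
  have hη : 0 < η := by rw [hηdef]; linarith
  obtain ⟨a₀, ha₀, hA⟩ := hF.condA (Icc 0 2) isCompact_Icc η hη
  obtain ⟨C2, hC2pos, hC2⟩ := BddII.stepB F d η t h a₀ (n+1) (by omega)
    hF.mem.cont hsm hF.mem.pos ht0 ht1 hh0 hh2 hη ha₀ hA
  set c' := ∏ i ∈ Finset.range (n+1), (d - (i:ℝ)) with hc'def
  set C1 := (|c'| + 1) * C2 with hC1def
  have hC1pos : 0 < C1 := mul_pos (by positivity) hC2pos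
  set β : ℝ := d - η - ((n:ℝ)+1) with hβ
  set c4 : ℝ := (n:ℝ) - d + η with hc4def
  have hc4pos : 0 < c4 := by rw [hc4def]; linarith
  have hβ1 : β + 1 = -c4 := by rw [hβ, hc4def]; ring
  have hβne : β ≠ -1 := by
    intro hee
    have : β + 1 = 0 := by rw [hee]; ring
    rw [hβ1] at this; linarith
  set C3 := C1 / c4 with hC3def
  have hC3pos : 0 < C3 := div_pos hC1pos hc4pos
  set q : ℝ := 2*ε + (l - ε) + (β + 1) with hq
  have hq1 : 0 < q + 1 := by
    rw [hq, hβ1, hc4def, hηdef]; linarith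
  -- pointwise derivative bound
  have hptw : ∀ z r : ℝ, t ≤ z → z ≤ t + h → t - h ≤ r → r < t →
      |pderiv2 n 0 (pderiv2 0 1 F) z r| ≤ C1 * (z - r) ^ β := by
    intro z r hz1 hz2 hr1 hr2
    have hrz : r < z := lt_of_lt_of_le hr2 hz1
    have hgpos : 0 < z - r := by linarith
    have hglt : z - r < h₀c := by linarith
    have hzK : z ∈ Icc (0:ℝ) 2 := ⟨by linarith, by linarith⟩
    have hcc := hC (z - r) hgpos hglt z hzK
    rw [show z - (z - r) = r by ring] at hcc
    simp only [Nat.add_sub_cancel] at hcc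
    have hFpos : 0 < F z r := hF.mem.pos (z, r) hrz
    obtain ⟨hsw1, hsw2⟩ := BddII.swap_eq hsm hrz
    rw [hsw1, ← hsw2]
    set P := pderiv2 n 1 F z r with hPdef
    have h1 : |(z-r)^(n+1) * P / F z r| < |c'| + 1 := by
      have h0 := abs_add_le ((z-r)^(n+1) * P / F z r + c') (-c')
      simp only [add_neg_cancel_right, abs_neg] at h0
      linarith
    rw [abs_div, abs_mul, abs_pow, abs_of_pos hgpos, abs_of_pos hFpos] at h1
    rw [div_lt_iff₀ hFpos] at h1
    have h2 : |P| ≤ (|c'| + 1) * F z r / (z - r)^(n+1) := by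
      rw [le_div_iff₀ (pow_pos hgpos _)]
      calc |P| * (z-r)^(n+1) = (z-r)^(n+1) * |P| := mul_comm _ _
        _ ≤ (|c'|+1) * F z r := le_of_lt h1
    have hFb : F z r ≤ C2 * (z - r) ^ (d - η) := by
      have h3 := hC2 z ⟨hz1, hz2⟩ (z - r) ⟨hgpos, by linarith⟩
      rwa [show z - (z - r) = r by ring] at h3
    calc |P| ≤ (|c'| + 1) * F z r / (z - r)^(n+1) := h2
      _ ≤ (|c'| + 1) * (C2 * (z - r) ^ (d - η)) / (z - r)^(n+1) := by
          gcongr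
      _ = C1 * (z - r) ^ β := by
          have hfin : C1 * (z - r) ^ β
              = (|c'| + 1) * (C2 * (z - r) ^ (d - η)) / (z - r)^(n+1) := by
            rw [hβ, Real.rpow_sub hgpos,
              show ((n:ℝ)+1) = ((n+1:ℕ):ℝ) by push_cast; ring,
              Real.rpow_natCast, hC1def]
            ring
          exact hfin.symm
  refine ⟨C3 * (h ^ (q+1) / (q+1)), h, hh0, ?_⟩
  intro δ hδ0 hδh
  have hInner : ∀ r : ℝ, t - h ≤ r → r ≤ t - δ →
      (∫ z in t..(t+h), |pderiv2 n 0 (pderiv2 0 1 F) z r|) ≤ C3 * (t - r) ^ (β + 1) := by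
    intro r hr1 hr2
    have hrt : r < t := by linarith
    have htr : 0 < t - r := by linarith
    have hRHS : 0 ≤ C3 * (t - r) ^ (β + 1) :=
      mul_nonneg (le_of_lt hC3pos) (Real.rpow_nonneg (le_of_lt htr) _)
    by_cases hig : IntervalIntegrable (fun z => |pderiv2 n 0 (pderiv2 0 1 F) z r|)
        volume t (t+h)
    · have hmajc : ContinuousOn (fun z => C1 * (z - r) ^ β) (uIcc t (t+h)) := by
        rw [uIcc_of_le (by linarith)]
        apply continuousOn_const.mul
        apply ContinuousOn.rpow_const (continuous_id.sub continuous_const).continuousOn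
        intro z hz
        left
        have := hz.1
        show z - r ≠ 0
        intro hcon; rw [sub_eq_zero] at hcon; rw [hcon] at this; linarith
      have hmaj : IntervalIntegrable (fun z => C1 * (z - r) ^ β) volume t (t+h) :=
        hmajc.intervalIntegrable
      have h1 : (∫ z in t..(t+h), |pderiv2 n 0 (pderiv2 0 1 F) z r|)
          ≤ ∫ z in t..(t+h), C1 * (z - r) ^ β :=
        intervalIntegral.integral_mono_on (by linarith) hig hmaj
          (fun z hz => hptw z r hz.1 hz.2 hr1 hrt)
      have hnm : (0:ℝ) ∉ uIcc (t - r) (t + h - r) := by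
        intro hmem
        rcases Set.mem_uIcc.mp hmem with ⟨h1', h2'⟩ | ⟨h1', h2'⟩ <;> linarith
      have h2 : ∫ z in t..(t+h), C1 * (z - r) ^ β
          = C1 * (((t + h - r) ^ (β+1) - (t - r) ^ (β+1)) / (β+1)) := by
        rw [intervalIntegral.integral_const_mul,
          intervalIntegral.integral_comp_sub_right (fun u => u ^ β) r,
          integral_rpow (Or.inr ⟨hβne, hnm⟩)]
      have h3 : C1 * (((t + h - r) ^ (β+1) - (t - r) ^ (β+1)) / (β+1))
          ≤ C3 * (t - r) ^ (β+1) := by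
        have hX : 0 ≤ (t + h - r) ^ (β+1) := Real.rpow_nonneg (by linarith) _
        set X := (t + h - r) ^ (β+1) with hXdef
        set Y := (t - r) ^ (β+1) with hYdef
        rw [hC3def, hβ1, div_neg]
        have h4 : -((X - Y)/c4) = (Y - X)/c4 := by ring
        rw [h4]
        calc C1 * ((Y - X)/c4) ≤ C1 * (Y/c4) := by
              apply mul_le_mul_of_nonneg_left _ (le_of_lt hC1pos)
              exact (div_le_div_iff_of_pos_right hc4pos).mpr (sub_le_self Y hX)
          _ = C1 / c4 * Y := by ring
      calc (∫ z in t..(t+h), |pderiv2 n 0 (pderiv2 0 1 F) z r|)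
          ≤ ∫ z in t..(t+h), C1 * (z - r) ^ β := h1
        _ = C1 * (((t + h - r) ^ (β+1) - (t - r) ^ (β+1)) / (β+1)) := h2
        _ ≤ C3 * (t - r) ^ (β+1) := h3
    · rw [intervalIntegral.integral_undef hig]
      exact hRHS
  have hInnerNonneg : ∀ r : ℝ, 0 ≤ ∫ z in t..(t+h), |pderiv2 n 0 (pderiv2 0 1 F) z r| :=
    fun r => intervalIntegral.integral_nonneg (by linarith) (fun u _ => abs_nonneg _)
  have hMnonneg : 0 ≤ C3 * (h ^ (q+1) / (q+1)) :=
    mul_nonneg (le_of_lt hC3pos)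
      (div_nonneg (Real.rpow_nonneg (le_of_lt hh0) _) (le_of_lt hq1))
  by_cases hOI : IntervalIntegrable (fun r => (t - r) ^ (l - ε) *
      ∫ z in t..(t+h), |pderiv2 n 0 (pderiv2 0 1 F) z r|) volume (t-h) (t-δ)
  swap
  · rw [intervalIntegral.integral_undef hOI, mul_zero]
    exact hMnonneg
  have hab : t - h ≤ t - δ := by linarith
  have hptw2 : ∀ r ∈ Icc (t-h) (t-δ),
      δ ^ (2*ε) * ((t - r) ^ (l - ε) * ∫ z in t..(t+h), |pderiv2 n 0 (pderiv2 0 1 F) z r|)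
        ≤ C3 * (t - r) ^ q := by
    intro r hr
    have hδr : δ ≤ t - r := by linarith [hr.2]
    have htr : 0 < t - r := lt_of_lt_of_le hδ0 hδr
    have e1 : δ ^ (2*ε) ≤ (t - r) ^ (2*ε) :=
      Real.rpow_le_rpow (le_of_lt hδ0) hδr (by linarith)
    have e2 := hInner r hr.1 hr.2
    have e3 : 0 ≤ (t - r) ^ (l - ε) := Real.rpow_nonneg (le_of_lt htr) _
    calc δ ^ (2*ε) * ((t - r) ^ (l-ε) * ∫ z in t..(t+h), |pderiv2 n 0 (pderiv2 0 1 F) z r|)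
        ≤ (t-r)^(2*ε) * ((t-r)^(l-ε) * (C3 * (t-r)^(β+1))) := by
          apply mul_le_mul e1 (mul_le_mul_of_nonneg_left e2 e3)
            (mul_nonneg e3 (hInnerNonneg r)) (Real.rpow_nonneg (le_of_lt htr) _)
      _ = C3 * (t-r)^q := by
          have hx : (t-r)^q = (t-r)^(2*ε) * (t-r)^(l-ε) * (t-r)^(β+1) := by
            rw [hq, Real.rpow_add htr, Real.rpow_add htr]
          rw [hx]; ring
  have hmaj2 : IntervalIntegrable (fun r => C3 * (t-r)^q) volume (t-h) (t-δ) := by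
    apply ContinuousOn.intervalIntegrable
    rw [uIcc_of_le hab]
    apply continuousOn_const.mul
    apply ContinuousOn.rpow_const (continuous_const.sub continuous_id).continuousOn
    intro r hr
    left
    have := hr.2
    show t - r ≠ 0
    intro hcon; rw [sub_eq_zero] at hcon; rw [← hcon] at this; linarith
  calc δ ^ (2*ε) * (∫ r in (t-h)..(t-δ), (t - r) ^ (l - ε) *
        ∫ z in t..(t+h), |pderiv2 n 0 (pderiv2 0 1 F) z r|)
      = ∫ r in (t-h)..(t-δ), δ^(2*ε) * ((t - r) ^ (l - ε) *
        ∫ z in t..(t+h), |pderiv2 n 0 (pderiv2 0 1 F) z r|) :=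
        (intervalIntegral.integral_const_mul _ _).symm
    _ ≤ ∫ r in (t-h)..(t-δ), C3 * (t-r)^q :=
        intervalIntegral.integral_mono_on hab (hOI.const_mul _) hmaj2 hptw2
    _ = C3 * ∫ r in (t-h)..(t-δ), (t-r)^q := intervalIntegral.integral_const_mul _ _
    _ = C3 * ∫ u in δ..h, u^q := by
        rw [intervalIntegral.integral_comp_sub_left (fun u => u^q) t,
          show t - (t-δ) = δ by ring, show t - (t-h) = h by ring]
    _ = C3 * ((h^(q+1) - δ^(q+1))/(q+1)) := by rw [integral_rpow (Or.inl (by linarith))]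
    _ ≤ C3 * (h^(q+1)/(q+1)) := by
        apply mul_le_mul_of_nonneg_left _ (le_of_lt hC3pos)
        exact (div_le_div_iff_of_pos_right hq1).mpr (sub_le_self _ (Real.rpow_nonneg (le_of_lt hδ0) _))
end
end

section
/- Let d ∈ (0,1), l > 0, let F ∈ SR_d^{⌊l+d⌋+2}(0+), set f = F^{(0,1)}, let g : [0,∞) → ℝ be càdlàg, let t ∈ (0,1), let ε ∈ (0,l), and let P be a polynomial of degree at most ⌊l⌋ such that |g(r) − P(r)| ≤ C₀|r−t|^{l−ε} for all r ∈ [0,1] and some C₀ > 0. Then there exist constants C > 0 and h' > 0 such that |∫_{t−δ}^{v} (f(u,r) − f(v,r))[g(r) − P(r)]dr| ≤ C·F(u,v)·(|u−t|^{l−ε} + |v−t|^{l−ε}) for all u,v ∈ (t, t+h') with u − v = δ > 0. -/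
open Set Filter MeasureTheory intervalIntegral Polynomial Metric
open scoped Topology

noncomputable section

private lemma isOpen_Etil' : IsOpen Etil := isOpen_lt continuous_snd continuous_fst

private lemma pd01_eq (F : ℝ → ℝ → ℝ) (s r : ℝ) :
    pderiv2 0 1 F s r = deriv (fun r' => F s r') r := by
  simp [pderiv2, iteratedDeriv_zero, iteratedDeriv_one]

private lemma pd10_eq (F : ℝ → ℝ → ℝ) (s r : ℝ) :
    pderiv2 1 0 F s r = deriv (fun s' => F s' r) s := by
  simp [pderiv2, iteratedDeriv_zero, iteratedDeriv_one]

private lemma pd11_eq (F : ℝ → ℝ → ℝ) (s r : ℝ) :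
    pderiv2 1 1 F s r = deriv (fun r' => deriv (fun s' => F s' r') s) r := by
  simp [pderiv2, iteratedDeriv_one]

private lemma neg_of_mul_div_neg {h0 x Fv : ℝ} (hh : 0 < h0) (hFv : 0 < Fv)
    (h : h0 * x / Fv < 0) : x < 0 := by
  rcases div_neg_iff.mp h with ⟨h1, h2⟩ | ⟨h1, h2⟩
  · linarith
  · nlinarith

private lemma pos_of_mul_div_pos {h0 x Fv : ℝ} (hh : 0 < h0) (hFv : 0 < Fv)
    (h : 0 < h0 * x / Fv) : 0 < x := by
  rcases div_pos_iff.mp h with ⟨h1, h2⟩ | ⟨h1, h2⟩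
  · nlinarith
  · linarith

section SliceLemmas

variable {F : ℝ → ℝ → ℝ} (hs : ContDiffOn ℝ 2 (fun p : ℝ × ℝ => F p.1 p.2) Etil)
include hs

private lemma diffAt_of_mem {p : ℝ × ℝ} (hp : p ∈ Etil) :
    DifferentiableAt ℝ (fun p : ℝ × ℝ => F p.1 p.2) p :=
  (hs.contDiffAt (isOpen_Etil'.mem_nhds hp)).differentiableAt two_ne_zero

private lemma hasDerivAt_sliceR {s r : ℝ} (h : r < s) :
    HasDerivAt (fun r' => F s r')
      (fderiv ℝ (fun p : ℝ × ℝ => F p.1 p.2) (s, r) (0, 1)) r := by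
  have hd := (diffAt_of_mem hs (show ((s, r) : ℝ × ℝ) ∈ Etil from h)).hasFDerivAt
  have hline : HasDerivAt (fun r' : ℝ => ((s, r') : ℝ × ℝ)) ((0 : ℝ), (1 : ℝ)) r :=
    (hasDerivAt_const r s).prodMk (hasDerivAt_id r)
  simpa [Function.comp_def] using hd.comp_hasDerivAt r hline

private lemma hasDerivAt_sliceS {s r : ℝ} (h : r < s) :
    HasDerivAt (fun s' => F s' r)
      (fderiv ℝ (fun p : ℝ × ℝ => F p.1 p.2) (s, r) (1, 0)) s := by
  have hd := (diffAt_of_mem hs (show ((s, r) : ℝ × ℝ) ∈ Etil from h)).hasFDerivAt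
  have hline : HasDerivAt (fun s' : ℝ => ((s', r) : ℝ × ℝ)) ((1 : ℝ), (0 : ℝ)) s :=
    (hasDerivAt_id s).prodMk (hasDerivAt_const s r)
  simpa [Function.comp_def] using hd.comp_hasDerivAt s hline

private lemma hasDerivAt_mixed {s r : ℝ} (h : r < s) :
    HasDerivAt (fun s' => pderiv2 0 1 F s' r) (pderiv2 1 1 F s r) s := by
  set F2 : ℝ × ℝ → ℝ := fun p => F p.1 p.2 with hF2
  set D2 := fderiv ℝ (fderiv ℝ F2) (s, r) with hD2
  have hmem : ((s, r) : ℝ × ℝ) ∈ Etil := h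
  have hC2 : ContDiffAt ℝ 2 F2 (s, r) := hs.contDiffAt (isOpen_Etil'.mem_nhds hmem)
  have hd2 : HasFDerivAt (fderiv ℝ F2) D2 (s, r) :=
    ((hC2.fderiv_right (m := 1) one_add_one_eq_two.le).differentiableAt one_ne_zero).hasFDerivAt
  have hev : ∀ᶠ q : ℝ × ℝ in 𝓝 (s, r), HasFDerivAt F2 (fderiv ℝ F2 q) q := by
    filter_upwards [isOpen_Etil'.mem_nhds hmem] with q hq
    exact (diffAt_of_mem hs hq).hasFDerivAt
  have hsym := second_derivative_symmetric_of_eventually hev hd2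
    ((0 : ℝ), (1 : ℝ)) ((1 : ℝ), (0 : ℝ))
  have key : HasDerivAt (fun s' => fderiv ℝ F2 (s', r) (0, 1)) (D2 (1, 0) (0, 1)) s := by
    have h1 : HasDerivAt (fun s' => fderiv ℝ F2 (s', r)) (D2 (1, 0)) s := by
      have hline : HasDerivAt (fun s' : ℝ => ((s', r) : ℝ × ℝ)) ((1 : ℝ), (0 : ℝ)) s :=
        (hasDerivAt_id s).prodMk (hasDerivAt_const s r)
      simpa [Function.comp_def] using hd2.comp_hasDerivAt s hline
    simpa using h1.clm_apply (hasDerivAt_const s (((0 : ℝ), (1 : ℝ)) : ℝ × ℝ))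
  have heq : (fun s' => pderiv2 0 1 F s' r) =ᶠ[𝓝 s]
      fun s' => fderiv ℝ F2 (s', r) (0, 1) := by
    filter_upwards [eventually_gt_nhds h] with s' hs'
    rw [pd01_eq]
    exact (hasDerivAt_sliceR hs hs').deriv
  have hmain : HasDerivAt (fun s' => pderiv2 0 1 F s' r) (D2 (1, 0) (0, 1)) s :=
    key.congr_of_eventuallyEq heq
  have hval : pderiv2 1 1 F s r = D2 (0, 1) (1, 0) := by
    rw [pd11_eq]
    have key2 : HasDerivAt (fun r' => fderiv ℝ F2 (s, r') (1, 0)) (D2 (0, 1) (1, 0)) r := by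
      have h1 : HasDerivAt (fun r' => fderiv ℝ F2 (s, r')) (D2 (0, 1)) r := by
        have hline : HasDerivAt (fun r' : ℝ => ((s, r') : ℝ × ℝ)) ((0 : ℝ), (1 : ℝ)) r :=
          (hasDerivAt_const r s).prodMk (hasDerivAt_id r)
        simpa [Function.comp_def] using hd2.comp_hasDerivAt r hline
      simpa using h1.clm_apply (hasDerivAt_const r (((1 : ℝ), (0 : ℝ)) : ℝ × ℝ))
    have heq2 : (fun r' => deriv (fun s' => F s' r') s) =ᶠ[𝓝 r]
        fun r' => fderiv ℝ F2 (s, r') (1, 0) := by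
      filter_upwards [eventually_lt_nhds h] with r' hr'
      exact (hasDerivAt_sliceS hs hr').deriv
    rw [heq2.deriv_eq]
    exact key2.deriv
  rw [hval, hsym]
  exact hmain

end SliceLemmas

/-- Lemma 6.4: bound on the near-diagonal part of `I₂,₁`. -/
theorem bound_I21_near
    (d l : ℝ) (hd : d ∈ Set.Ioo (0:ℝ) 1) (hl : 0 < l)
    (F : ℝ → ℝ → ℝ) (hF : SmoothVariation d ((⌊l + d⌋).toNat + 2) F)
    (f : ℝ → ℝ → ℝ) (hf : f = pderiv2 0 1 F)
    (g : ℝ → ℝ) (hg : CadlagOn g)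
    (t : ℝ) (ht : t ∈ Set.Ioo (0:ℝ) 1) (ε : ℝ) (hε : ε ∈ Set.Ioo (0:ℝ) l)
    (P : Polynomial ℝ) (hP : (P.natDegree : ℤ) ≤ ⌊l⌋)
    (C₀ : ℝ) (hC₀ : 0 < C₀)
    (hgP : ∀ r ∈ Set.Icc (0:ℝ) 1, |g r - P.eval r| ≤ C₀ * |r - t| ^ (l - ε)) :
    ∃ C > 0, ∃ h' > 0,
      ∀ u v : ℝ, u ∈ Set.Ioo t (t + h') → v ∈ Set.Ioo t (t + h') → v < u →
        |∫ r in (t - (u - v))..v, (f u r - f v r) * (g r - P.eval r)| ≤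
          C * F u v * (|u - t| ^ (l - ε) + |v - t| ^ (l - ε)) := by
  obtain ⟨hd0, hd1⟩ := hd
  obtain ⟨ht0, ht1⟩ := ht
  obtain ⟨hε0, hεl⟩ := hε
  subst hf
  have hlε : (0 : ℝ) ≤ l - ε := by linarith
  have hsm : ContDiffOn ℝ 2 (fun p : ℝ × ℝ => F p.1 p.2) Etil :=
    hF.mem.smooth.of_le (by exact_mod_cast Nat.le_add_left 2 (⌊l + d⌋).toNat)
  set K : Set ℝ := Icc (t - 1) (t + 1) with hK
  obtain ⟨δA, hδA, hA⟩ := hF.condA K isCompact_Icc d hd0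
  obtain ⟨δB, hδB, hB⟩ := hF.condB K isCompact_Icc d hd0
  obtain ⟨δC, hδC, hC⟩ := hF.condC 2 le_rfl (by omega) K isCompact_Icc (d * (1 - d))
    (by nlinarith)
  set h' : ℝ := min (min (δA / 3) (δB / 3)) (min (δC / 3) (min (t / 2) ((1 - t) / 2)))
    with hh'
  have hh'0 : 0 < h' :=
    lt_min (lt_min (by linarith) (by linarith))
      (lt_min (by linarith) (lt_min (by linarith) (by linarith)))
  refine ⟨C₀, hC₀, h', hh'0, ?_⟩
  rintro u v ⟨htu, hu⟩ ⟨htv, hv⟩ hvu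
  have hh'A : h' ≤ δA / 3 := le_trans (min_le_left _ _) (min_le_left _ _)
  have hh'B : h' ≤ δB / 3 := le_trans (min_le_left _ _) (min_le_right _ _)
  have hh'C : h' ≤ δC / 3 := le_trans (min_le_right _ _) (min_le_left _ _)
  have hh't : h' ≤ t / 2 :=
    le_trans (min_le_right _ _) (le_trans (min_le_right _ _) (min_le_left _ _))
  have hh't1 : h' ≤ (1 - t) / 2 :=
    le_trans (min_le_right _ _) (le_trans (min_le_right _ _) (min_le_right _ _))
  set a : ℝ := t - (u - v) with ha
  have hav : a < v := by simp only [ha]; linarith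
  have ha0 : 0 < a := by simp only [ha]; linarith
  have hu1 : u < 1 := by linarith
  have hv1 : v < 1 := by linarith
  have huaK : u - a < 2 * h' := by simp only [ha]; linarith
  have haK : a ∈ K := ⟨by simp only [ha]; linarith, by simp only [ha]; linarith⟩
  have hsK : ∀ s : ℝ, v ≤ s → s ≤ u → s ∈ K := fun s h1 h2 => ⟨by linarith, by linarith⟩
  -- f is negative near the diagonal
  have hfneg : ∀ w, v ≤ w → w ≤ u → ∀ r ∈ Ioo a v, pderiv2 0 1 F w r < 0 := by
    intro w hvw hwu r hr
    have hrw : r < w := lt_of_lt_of_le hr.2 hvw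
    have h2 := hA (w - r) (by linarith [hr.1, hr.2]) (by linarith [hr.1]) w (hsK w hvw hwu)
    rw [sub_sub_cancel] at h2
    have habs := abs_lt.mp h2
    have hX : (w - r) * pderiv2 0 1 F w r / F w r < 0 := by linarith [habs.2]
    exact neg_of_mul_div_neg (by linarith)
      (show 0 < F w r from hF.mem.pos (w, r) hrw) hX
  -- mixed second partial is positive near the diagonal
  have hH : ∀ s r, r ∈ Ioo a v → s ∈ Icc v u → 0 < pderiv2 1 1 F s r := by
    intro s r hr hsI
    have hrs : r < s := lt_of_lt_of_le hr.2 hsI.1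
    have h2 := hC (s - r) (by linarith) (by linarith [hr.1, hsI.2]) s (hsK s hsI.1 hsI.2)
    rw [sub_sub_cancel] at h2
    have hprod : ∏ i ∈ Finset.range 2, (d - (i : ℝ)) = d * (d - 1) := by
      rw [Finset.prod_range_succ, Finset.prod_range_one]
      norm_num
    rw [hprod] at h2
    norm_num at h2
    have habs := abs_lt.mp h2
    have hX : 0 < (s - r) ^ 2 * pderiv2 1 1 F s r / F s r := by nlinarith [habs.1]
    exact pos_of_mul_div_pos (pow_pos (by linarith) 2)
      (show 0 < F s r from hF.mem.pos (s, r) hrs) hX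
  -- ∂_s F is positive near the diagonal
  have hG : ∀ s, v ≤ s → s ≤ u → 0 < pderiv2 1 0 F s a := by
    intro s hvs hsu
    have has : a < s := lt_of_lt_of_le hav hvs
    have h2 := hB (s - a) (by linarith) (by linarith) a haK
    have hrw : a + (s - a) = s := by ring
    rw [hrw] at h2
    have habs := abs_lt.mp h2
    have hX : 0 < (s - a) * pderiv2 1 0 F s a / F s a := by linarith [habs.1]
    exact pos_of_mul_div_pos (by linarith)
      (show 0 < F s a from hF.mem.pos (s, a) has) hX
  -- monotonicity of f in the first variable
  have hmono_f : ∀ r ∈ Ioo a v, pderiv2 0 1 F v r ≤ pderiv2 0 1 F u r := by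
    intro r hr
    have hmono : MonotoneOn (fun s => pderiv2 0 1 F s r) (Icc v u) := by
      apply monotoneOn_of_deriv_nonneg (convex_Icc v u)
      · intro s hsI
        exact (hasDerivAt_mixed hsm
          (lt_of_lt_of_le hr.2 hsI.1)).continuousAt.continuousWithinAt
      · intro s hsI
        rw [interior_Icc] at hsI
        exact (hasDerivAt_mixed hsm
          (lt_of_lt_of_le hr.2 hsI.1.le)).differentiableAt.differentiableWithinAt
      · intro s hsI
        rw [interior_Icc] at hsI
        rw [(hasDerivAt_mixed hsm (lt_of_lt_of_le hr.2 hsI.1.le)).deriv]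
        exact (hH s r hr (Ioo_subset_Icc_self hsI)).le
    exact hmono (left_mem_Icc.2 hvu.le) (right_mem_Icc.2 hvu.le) hvu.le
  -- monotonicity of F (·, a)
  have hmono_Fa : F v a ≤ F u a := by
    have hmono : MonotoneOn (fun s => F s a) (Icc v u) := by
      apply monotoneOn_of_deriv_nonneg (convex_Icc v u)
      · intro s hsI
        exact (hasDerivAt_sliceS hsm
          (lt_of_lt_of_le hav hsI.1)).continuousAt.continuousWithinAt
      · intro s hsI
        rw [interior_Icc] at hsI
        exact (hasDerivAt_sliceS hsm
          (lt_of_lt_of_le hav hsI.1.le)).differentiableAt.differentiableWithinAt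
      · intro s hsI
        rw [interior_Icc] at hsI
        rw [← pd10_eq]
        exact (hG s hsI.1.le hsI.2.le).le
    exact hmono (left_mem_Icc.2 hvu.le) (right_mem_Icc.2 hvu.le) hvu.le
  -- F is nonnegative on the diagonal
  have hFvv : 0 ≤ F v v := by
    have hslice : ContinuousOn (fun r => F v r) (Iic v) := by
      have hcv : Continuous (fun r : ℝ => ((v, r) : ℝ × ℝ)) := by fun_prop
      exact hF.mem.cont.comp hcv.continuousOn (fun r (hr : r ∈ Iic v) => (hr : r ≤ v))
    have h1 : Tendsto (fun r => F v r) (𝓝[<] v) (𝓝 (F v v)) :=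
      (hslice v (le_refl v)).mono Iio_subset_Iic_self
    refine ge_of_tendsto h1 ?_
    filter_upwards [self_mem_nhdsWithin] with r hr
    exact (hF.mem.pos (v, r) hr).le
  -- FTC for the slices
  have hkey : ∀ w, v ≤ w → w ≤ u →
      IntervalIntegrable (fun r => pderiv2 0 1 F w r) volume a v ∧
      ∫ r in a..v, pderiv2 0 1 F w r = F w v - F w a := by
    intro w hvw hwu
    have hcont : ContinuousOn (fun r => F w r) (Icc a v) := by
      have hcv : Continuous (fun r : ℝ => ((w, r) : ℝ × ℝ)) := by fun_prop
      exact hF.mem.cont.comp hcv.continuousOn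
        (fun r hr => show r ≤ w from le_trans hr.2 hvw)
    have hderiv : ∀ r ∈ Ioo a v, HasDerivAt (fun r' => F w r') (pderiv2 0 1 F w r) r := by
      intro r hr
      have h1 := hasDerivAt_sliceR hsm (lt_of_lt_of_le hr.2 hvw)
      rw [pd01_eq]
      exact h1.differentiableAt.hasDerivAt
    have hint0 : IntegrableOn (fun r => -pderiv2 0 1 F w r) (Ioc a v) :=
      integrableOn_deriv_of_nonneg hcont.neg (fun r hr => (hderiv r hr).neg)
        (fun r hr => neg_nonneg.2 (hfneg w hvw hwu r hr).le)
    have hint : IntervalIntegrable (fun r => pderiv2 0 1 F w r) volume a v := by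
      rw [intervalIntegrable_iff_integrableOn_Ioc_of_le hav.le]
      have h2 : (fun r => pderiv2 0 1 F w r) = (fun r => -(-pderiv2 0 1 F w r)) := by
        funext r; ring
      rw [h2]
      exact hint0.neg
    exact ⟨hint, integral_eq_sub_of_hasDeriv_right_of_le hav.le hcont
      (fun r hr => (hderiv r hr).hasDerivWithinAt) hint⟩
  obtain ⟨hIu, hEu⟩ := hkey u hvu.le le_rfl
  obtain ⟨hIv, hEv⟩ := hkey v le_rfl hvu.le
  set M : ℝ := C₀ * (|u - t| ^ (l - ε) + |v - t| ^ (l - ε)) with hM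
  have hM0 : 0 ≤ M := by positivity
  -- pointwise bound
  have hptwise : ∀ r ∈ Ioo a v,
      |(pderiv2 0 1 F u r - pderiv2 0 1 F v r) * (g r - P.eval r)| ≤
        (pderiv2 0 1 F u r - pderiv2 0 1 F v r) * M := by
    intro r hr
    have hdf : 0 ≤ pderiv2 0 1 F u r - pderiv2 0 1 F v r := sub_nonneg.2 (hmono_f r hr)
    have hr01 : r ∈ Icc (0 : ℝ) 1 := ⟨le_of_lt (lt_trans ha0 hr.1), by linarith [hr.2]⟩
    have habs : |r - t| ^ (l - ε) ≤ |u - t| ^ (l - ε) + |v - t| ^ (l - ε) := by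
      rcases le_total r t with h1 | h1
      · have h2 : |r - t| ≤ |u - t| := by
          rw [abs_of_nonpos (by linarith), abs_of_pos (by linarith : (0 : ℝ) < u - t)]
          have := hr.1
          simp only [ha] at this
          linarith
        calc |r - t| ^ (l - ε) ≤ |u - t| ^ (l - ε) :=
              Real.rpow_le_rpow (abs_nonneg _) h2 hlε
          _ ≤ _ := le_add_of_nonneg_right (Real.rpow_nonneg (abs_nonneg _) _)
      · have h2 : |r - t| ≤ |v - t| := by
          rw [abs_of_nonneg (by linarith), abs_of_pos (by linarith : (0 : ℝ) < v - t)]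
          linarith [hr.2]
        calc |r - t| ^ (l - ε) ≤ |v - t| ^ (l - ε) :=
              Real.rpow_le_rpow (abs_nonneg _) h2 hlε
          _ ≤ _ := le_add_of_nonneg_left (Real.rpow_nonneg (abs_nonneg _) _)
    calc |(pderiv2 0 1 F u r - pderiv2 0 1 F v r) * (g r - P.eval r)|
        = (pderiv2 0 1 F u r - pderiv2 0 1 F v r) * |g r - P.eval r| := by
          rw [abs_mul, abs_of_nonneg hdf]
      _ ≤ (pderiv2 0 1 F u r - pderiv2 0 1 F v r) * (C₀ * |r - t| ^ (l - ε)) :=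
          mul_le_mul_of_nonneg_left (hgP r hr01) hdf
      _ ≤ (pderiv2 0 1 F u r - pderiv2 0 1 F v r) * M := by
          refine mul_le_mul_of_nonneg_left ?_ hdf
          rw [hM]
          exact mul_le_mul_of_nonneg_left habs hC₀.le
  have hFuv : 0 < F u v := hF.mem.pos (u, v) hvu
  have hRHS : 0 ≤ C₀ * F u v * (|u - t| ^ (l - ε) + |v - t| ^ (l - ε)) := by
    have h0 : (0 : ℝ) ≤ |u - t| ^ (l - ε) + |v - t| ^ (l - ε) := by positivity
    exact mul_nonneg (mul_nonneg hC₀.le hFuv.le) h0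
  rw [intervalIntegral.integral_of_le hav.le, MeasureTheory.integral_Ioc_eq_integral_Ioo]
  by_cases hInt : IntegrableOn
      (fun r => (pderiv2 0 1 F u r - pderiv2 0 1 F v r) * (g r - P.eval r)) (Ioo a v) volume
  · have hbnd_int : IntegrableOn
        (fun r => (pderiv2 0 1 F u r - pderiv2 0 1 F v r) * M) (Ioo a v) volume := by
      have h1 := hIu.sub hIv
      rw [intervalIntegrable_iff_integrableOn_Ioc_of_le hav.le] at h1
      exact (h1.mono_set Ioo_subset_Ioc_self).mul_const M
    calc |∫ r in Ioo a v, (pderiv2 0 1 F u r - pderiv2 0 1 F v r) * (g r - P.eval r)|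
        ≤ ∫ r in Ioo a v,
            |(pderiv2 0 1 F u r - pderiv2 0 1 F v r) * (g r - P.eval r)| := by
          simpa [Real.norm_eq_abs, abs_mul] using
            norm_integral_le_integral_norm (μ := volume.restrict (Ioo a v))
              (fun r => (pderiv2 0 1 F u r - pderiv2 0 1 F v r) * (g r - P.eval r))
      _ ≤ ∫ r in Ioo a v, (pderiv2 0 1 F u r - pderiv2 0 1 F v r) * M :=
          setIntegral_mono_on hInt.abs hbnd_int measurableSet_Ioo hptwise
      _ = (∫ r in a..v, (pderiv2 0 1 F u r - pderiv2 0 1 F v r)) * M := by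
          rw [← MeasureTheory.integral_Ioc_eq_integral_Ioo,
            ← intervalIntegral.integral_of_le hav.le, intervalIntegral.integral_mul_const]
      _ = ((F u v - F u a) - (F v v - F v a)) * M := by
          rw [intervalIntegral.integral_sub hIu hIv, hEu, hEv]
      _ ≤ F u v * M := by
          refine mul_le_mul_of_nonneg_right ?_ hM0
          linarith
      _ = C₀ * F u v * (|u - t| ^ (l - ε) + |v - t| ^ (l - ε)) := by
          rw [hM]; ring
  · rw [MeasureTheory.integral_undef hInt]
    simpa using hRHS
end
end
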